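/- Let M ≥ 1 be an integer (M = 2^{N−1}) and x ≥ 0 a real number, and set p = (M+x)/(2M+x). Define the following vectors in ℝ^{2M}, indexed by s ∈ {0,…,2M−1}: v(2i) = (1 + x·[i=0])/(M+x) and v(2i+1) = 0 for 0 ≤ i < M; and for each j ∈ {0,…,M−1}, u_j(2i+1) = (1 + x·[i=j])/(M+x) and u_j(2i) = 0 for 0 ≤ i < M. Then p·v + ((1−p)/M)·∑_{j=0}^{M−1} u_j = w, where w(0) = (1+x)/(2M+x) and w(s) = 1/(2M+x) for all s ≠ 0. -/

import Mathlib

/-- With `M ≥ 1`, `x ≥ 0`, `p = (M+x)/(2M+x)`, and the vectors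
`v`, `u_j`, `w` in `ℝ^{2M}` defined by
`v(2i) = (1 + x·[i=0])/(M+x)`, `v(2i+1) = 0`,
`u_j(2i+1) = (1 + x·[i=j])/(M+x)`, `u_j(2i) = 0`,
`w(0) = (1+x)/(2M+x)` and `w(s) = 1/(2M+x)` for `s ≠ 0`,
one has `p·v + ((1−p)/M)·∑_j u_j = w`. -/
theorem depolarized_state_reconstruction (M : ℕ) (hM : 1 ≤ M) (x : ℝ) (hx : 0 ≤ x)
    (p : ℝ) (hp : p = ((M : ℝ) + x) / (2 * M + x))
    (v : Fin (2 * M) → ℝ)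
    (hv : ∀ s : Fin (2 * M),
      v s = if s.val % 2 = 0 then
              (1 + if s.val = 0 then x else 0) / ((M : ℝ) + x)
            else 0)
    (u : Fin M → Fin (2 * M) → ℝ)
    (hu : ∀ (j : Fin M) (s : Fin (2 * M)),
      u j s = if s.val % 2 = 1 then
                (1 + if s.val = 2 * j.val + 1 then x else 0) / ((M : ℝ) + x)
              else 0)
    (w : Fin (2 * M) → ℝ)
    (hw : ∀ s : Fin (2 * M),
      w s = (1 + if s.val = 0 then x else 0) / (2 * (M : ℝ) + x)) :
    ∀ s : Fin (2 * M), p * v s + ((1 - p) / M) * ∑ j : Fin M, u j s = w s := by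
  intro s
  have hM1 : (1:ℝ) ≤ (M:ℝ) := by exact_mod_cast hM
  have hMpos : (0:ℝ) < (M:ℝ) := by linarith
  have hMx : (0:ℝ) < (M:ℝ) + x := by linarith
  have h2Mx : (0:ℝ) < 2*(M:ℝ) + x := by linarith
  rw [hv, hw, hp]
  rcases Nat.even_or_odd s.val with ⟨k, hk⟩ | ⟨k, hk⟩
  · have hmod : s.val % 2 = 0 := by omega
    have hsum : ∑ j : Fin M, u j s = 0 := by
      apply Finset.sum_eq_zero
      intro j _
      rw [hu]
      simp [hmod]
    rw [hsum, if_pos hmod]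
    by_cases h0 : s.val = 0
    · rw [if_pos h0]
      field_simp
      ring
    · rw [if_neg h0]
      field_simp
      ring
  · have hmod : s.val % 2 = 1 := by omega
    have hk' : k < M := by have := s.isLt; omega
    have hs0 : ¬ s.val = 0 := by omega
    have hne : ¬ s.val % 2 = 0 := by omega
    have hsum : ∑ j : Fin M, u j s = 1 := by
      have heach : ∀ j : Fin M, u j s
          = (1 + if j = (⟨k, hk'⟩ : Fin M) then x else 0) / ((M:ℝ)+x) := by
        intro j
        rw [hu, if_pos hmod]
        congr 2
        by_cases hj : j = (⟨k, hk'⟩ : Fin M)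
        · rw [if_pos hj, if_pos (by subst hj; simpa using by omega)]
        · rw [if_neg hj, if_neg ?_]
          intro hc
          apply hj
          have : j.val = k := by omega
          exact Fin.ext this
      rw [Finset.sum_congr rfl (fun j _ => heach j), ← Finset.sum_div,
        Finset.sum_add_distrib, Finset.sum_ite_eq' Finset.univ (⟨k, hk'⟩ : Fin M) (fun _ => x)]
      simp
      exact hMx.ne'
    rw [hsum, if_neg hne, if_neg hs0]
    field_simp
    ring
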